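/- Let A, C ∈ ℝ^{n×n}. There exists a C¹ map T : [a,c] → ℝ^{n×n} with T(x) invertible for all x ∈ [a,c] and det(A·T(a) + C·T(c)) ≠ 0 if and only if ker(Aᵀ) ∩ ker(Cᵀ) = {0}. -/

import Mathlib

open Matrix Set

section Aux

variable {n : ℕ}

private lemma charpoly_neg_eval' (M : Matrix (Fin n) (Fin n) ℝ) (t : ℝ) :
    (-M).charpoly.eval t = (M + t • 1).det := by
  have hmap : (charmatrix (-M)).map (Polynomial.evalRingHom t)
      = M + t • (1 : Matrix (Fin n) (Fin n) ℝ) := by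
    ext i j
    by_cases h : i = j
    · subst h
      simp [charmatrix_apply_eq, Matrix.add_apply, Matrix.smul_apply, Matrix.one_apply, add_comm]
    · simp [charmatrix_apply_ne _ _ _ h, Matrix.add_apply, Matrix.smul_apply,
        Matrix.one_apply_ne h]
  calc (-M).charpoly.eval t = (Polynomial.evalRingHom t) (charmatrix (-M)).det := rfl
    _ = ((charmatrix (-M)).map (Polynomial.evalRingHom t)).det := RingHom.map_det _ _
    _ = (M + t • 1).det := by rw [hmap]

private lemma exists_XY' (A C : Matrix (Fin n) (Fin n) ℝ)
    (h : LinearMap.ker Aᵀ.mulVecLin ⊓ LinearMap.ker Cᵀ.mulVecLin = ⊥) :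
    ∃ X Y : Matrix (Fin n) (Fin n) ℝ, A * X + C * Y = 1 := by
  set B : Matrix (Fin n) (Fin n ⊕ Fin n) ℝ := fromCols A C with hB
  have hinj : Function.Injective Bᵀ.mulVecLin := by
    rw [← LinearMap.ker_eq_bot, LinearMap.ker_eq_bot']
    intro v hv
    rw [Matrix.mulVecLin_apply, hB, transpose_fromCols, fromRows_mulVec] at hv
    have hA : Aᵀ *ᵥ v = 0 := by
      funext i; exact congrFun hv (Sum.inl i)
    have hC : Cᵀ *ᵥ v = 0 := by
      funext i; exact congrFun hv (Sum.inr i)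
    have : v ∈ LinearMap.ker Aᵀ.mulVecLin ⊓ LinearMap.ker Cᵀ.mulVecLin :=
      ⟨by simpa [Matrix.mulVecLin_apply, Matrix.mulVec_transpose] using hA,
       by simpa [Matrix.mulVecLin_apply, Matrix.mulVec_transpose] using hC⟩
    rw [h] at this
    exact this
  have hrankT : Bᵀ.rank = n := by
    rw [Matrix.rank, LinearMap.finrank_range_of_inj hinj]
    simp [Module.finrank_pi]
  have hrank : B.rank = n := by rw [← Matrix.rank_transpose, hrankT]
  have hrange : LinearMap.range B.mulVecLin = ⊤ := by
    apply Submodule.eq_top_of_finrank_eq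
    rw [← Matrix.rank, hrank]
    simp [Module.finrank_pi]
  have hsurj : Function.Surjective B.mulVecLin := LinearMap.range_eq_top.1 hrange
  choose s hs using fun j : Fin n => hsurj (fun i => (1 : Matrix (Fin n) (Fin n) ℝ) i j)
  refine ⟨Matrix.of fun i j => s j (Sum.inl i), Matrix.of fun i j => s j (Sum.inr i), ?_⟩
  ext i j
  have h1 : s j = Sum.elim (fun k => s j (Sum.inl k)) (fun k => s j (Sum.inr k)) := by
    funext x; cases x <;> rfl
  have h2 := hs j
  rw [Matrix.mulVecLin_apply, h1, hB, fromCols_mulVec_sumElim] at h2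
  have := congrFun h2 i
  simpa [Matrix.add_apply, Matrix.mul_apply, Matrix.mulVec, dotProduct] using this

private lemma exists_M0' (A C X Y : Matrix (Fin n) (Fin n) ℝ) (hXY : A * X + C * Y = 1) :
    ∃ M₀ : Matrix (Fin n) (Fin n) ℝ, (A + C * M₀).det ≠ 0 := by
  obtain ⟨ε, hε⟩ : ∃ ε : ℝ, ε ∉ ({0} ∪ {t | ((-X).charpoly).IsRoot t}
      ∪ (Inv.inv '' {t | ((-A).charpoly).IsRoot t}) : Set ℝ) := by
    have hfin : (({0} ∪ {t | ((-X).charpoly).IsRoot t}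
        ∪ (Inv.inv '' {t | ((-A).charpoly).IsRoot t})) : Set ℝ).Finite := by
      refine (Set.Finite.union (Set.Finite.union (Set.finite_singleton 0) ?_) ?_)
      · exact Polynomial.finite_setOf_isRoot (Matrix.charpoly_monic _).ne_zero
      · exact (Polynomial.finite_setOf_isRoot (Matrix.charpoly_monic _).ne_zero).image _
    exact hfin.infinite_compl.nonempty
  simp only [Set.mem_union, Set.mem_singleton_iff, Set.mem_setOf_eq, not_or] at hε
  obtain ⟨⟨hε0, hεX⟩, hεA⟩ := hε
  have hεinv : ¬ ((-A).charpoly).IsRoot ε⁻¹ := fun hroot => hεA ⟨ε⁻¹, hroot, by rw [inv_inv]⟩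
  set P : Matrix (Fin n) (Fin n) ℝ := X + ε • 1 with hP
  have hPdet : P.det ≠ 0 := by rw [hP, ← charpoly_neg_eval']; exact hεX
  have hPunit : IsUnit P.det := isUnit_iff_ne_zero.2 hPdet
  have hIA : ((1 : Matrix (Fin n) (Fin n) ℝ) + ε • A).det ≠ 0 := by
    have h1 : (1 : Matrix (Fin n) (Fin n) ℝ) + ε • A = ε • (A + ε⁻¹ • 1) := by
      rw [smul_add, smul_smul, mul_inv_cancel₀ hε0, one_smul, add_comm]
    rw [h1, Matrix.det_smul]
    refine mul_ne_zero (pow_ne_zero _ hε0) ?_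
    rw [← charpoly_neg_eval']; exact hεinv
  refine ⟨Y * P⁻¹, ?_⟩
  have key : A + C * (Y * P⁻¹) = (1 + ε • A) * P⁻¹ := by
    have hAP : (A * P + C * Y) = 1 + ε • A := by
      rw [hP, Matrix.mul_add, add_right_comm, hXY, Matrix.mul_smul, Matrix.mul_one]
    have hA' : A = A * P * P⁻¹ := by
      rw [Matrix.mul_assoc, Matrix.mul_nonsing_inv _ hPunit, Matrix.mul_one]
    calc A + C * (Y * P⁻¹) = A * P * P⁻¹ + C * Y * P⁻¹ := by rw [← hA', Matrix.mul_assoc]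
      _ = (A * P + C * Y) * P⁻¹ := by rw [Matrix.add_mul]
      _ = (1 + ε • A) * P⁻¹ := by rw [hAP]
  rw [key, Matrix.det_mul]
  refine mul_ne_zero hIA fun h0 => ?_
  have h1 : P⁻¹ * P = 1 := Matrix.nonsing_inv_mul _ hPunit
  have h2 := congrArg Matrix.det h1
  rw [Matrix.det_mul, h0, zero_mul, Matrix.det_one] at h2
  exact zero_ne_one h2

private lemma contDiff_exp_entry' (B : Matrix (Fin n) (Fin n) ℝ) (i j : Fin n) :
    ContDiff ℝ 1 fun x : ℝ => (NormedSpace.exp (x • B)) i j := by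
  letI : SeminormedRing (Matrix (Fin n) (Fin n) ℝ) := Matrix.linftyOpSemiNormedRing
  letI : NormedRing (Matrix (Fin n) (Fin n) ℝ) := Matrix.linftyOpNormedRing
  letI : NormedAlgebra ℝ (Matrix (Fin n) (Fin n) ℝ) := Matrix.linftyOpNormedAlgebra
  have h1 : ContDiff ℝ 1 fun x : ℝ => x • B := contDiff_id.smul contDiff_const
  have h2 : ContDiff ℝ 1
      (NormedSpace.exp : Matrix (Fin n) (Fin n) ℝ → Matrix (Fin n) (Fin n) ℝ) := by
    rw [contDiff_iff_contDiffAt]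
    intro x
    exact (NormedSpace.exp_analytic x).contDiffAt
  have h3 : ContDiff ℝ 1 (fun M : Matrix (Fin n) (Fin n) ℝ => M i j) := by
    have h := (LinearMap.toContinuousLinearMap
      ({ toFun := fun M => M i j
         map_add' := fun _ _ => rfl
         map_smul' := fun _ _ => rfl } : Matrix (Fin n) (Fin n) ℝ →ₗ[ℝ] ℝ)).contDiff (n := 1)
    change ContDiff ℝ 1 (fun M : Matrix (Fin n) (Fin n) ℝ => M i j) at h
    exact h
  exact h3.comp (h2.comp h1)

private lemma range_exp_mem_nhds' :
    Set.range (NormedSpace.exp : Matrix (Fin n) (Fin n) ℝ → Matrix (Fin n) (Fin n) ℝ)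
      ∈ nhds (1 : Matrix (Fin n) (Fin n) ℝ) := by
  letI : SeminormedRing (Matrix (Fin n) (Fin n) ℝ) := Matrix.linftyOpSemiNormedRing
  letI : NormedRing (Matrix (Fin n) (Fin n) ℝ) := Matrix.linftyOpNormedRing
  letI : NormedAlgebra ℝ (Matrix (Fin n) (Fin n) ℝ) := Matrix.linftyOpNormedAlgebra
  have h : HasStrictFDerivAt (NormedSpace.exp)
      ((ContinuousLinearEquiv.refl ℝ (Matrix (Fin n) (Fin n) ℝ) :
        Matrix (Fin n) (Fin n) ℝ →L[ℝ] Matrix (Fin n) (Fin n) ℝ)) 0 := by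
    exact (hasStrictFDerivAt_exp_zero (𝕂 := ℝ) (𝔸 := Matrix (Fin n) (Fin n) ℝ))
  have hmap := h.map_nhds_eq_of_equiv
  rw [NormedSpace.exp_zero] at hmap
  erw [← hmap]
  exact Filter.range_mem_map

end Aux

/-- There exists a C¹ map `T : [a,c] → ℝ^{n×n}` with `T(x)` invertible
for all `x ∈ [a,c]` and `det(A·T(a) + C·T(c)) ≠ 0` iff `ker(Aᵀ) ∩ ker(Cᵀ) = {0}`. -/
theorem exists_transform_iff_ker_inter_trivial
    {n : ℕ} {a c : ℝ} (hac : a < c)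
    (A C : Matrix (Fin n) (Fin n) ℝ) :
    (∃ T : ℝ → Matrix (Fin n) (Fin n) ℝ,
        (∀ i j, ContDiffOn ℝ 1 (fun x => T x i j) (Icc a c)) ∧
        (∀ x ∈ Icc a c, IsUnit (T x).det) ∧
        (A * T a + C * T c).det ≠ 0)
      ↔ LinearMap.ker Aᵀ.mulVecLin ⊓ LinearMap.ker Cᵀ.mulVecLin = ⊥ := by
  constructor
  · rintro ⟨T, _, _, hdet⟩
    rw [eq_bot_iff]
    intro v hv
    have hA : Aᵀ *ᵥ v = 0 := by
      have := hv.1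
      simpa [LinearMap.mem_ker, Matrix.mulVecLin_apply, Matrix.mulVec_transpose] using this
    have hC : Cᵀ *ᵥ v = 0 := by
      have := hv.2
      simpa [LinearMap.mem_ker, Matrix.mulVecLin_apply, Matrix.mulVec_transpose] using this
    set M : Matrix (Fin n) (Fin n) ℝ := A * T a + C * T c with hM
    have hMt : Mᵀ = (T a)ᵀ * Aᵀ + (T c)ᵀ * Cᵀ := by
      rw [hM, Matrix.transpose_add, Matrix.transpose_mul, Matrix.transpose_mul]
    have hMv : Mᵀ *ᵥ v = 0 := by
      rw [hMt, Matrix.add_mulVec, ← Matrix.mulVec_mulVec, ← Matrix.mulVec_mulVec, hA, hC,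
        Matrix.mulVec_zero, Matrix.mulVec_zero, add_zero]
    have hMtu : IsUnit Mᵀ.det := by
      rw [Matrix.det_transpose]; exact isUnit_iff_ne_zero.2 hdet
    have hv0 : v = 0 := by
      have h1 : (Mᵀ)⁻¹ * Mᵀ = 1 := Matrix.nonsing_inv_mul _ hMtu
      calc v = (1 : Matrix (Fin n) (Fin n) ℝ) *ᵥ v := (Matrix.one_mulVec v).symm
        _ = (Mᵀ)⁻¹ *ᵥ (Mᵀ *ᵥ v) := by rw [Matrix.mulVec_mulVec, h1]
        _ = 0 := by rw [hMv, Matrix.mulVec_zero]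
    simp [hv0]
  · intro h
    obtain ⟨X, Y, hXY⟩ := exists_XY' A C h
    obtain ⟨M₀, hM₀⟩ := exists_M0' A C X Y hXY
    -- the polynomial `t ↦ det (A + C * (1 + t • (M₀ - 1)))`
    set U : Matrix (Fin n) (Fin n) ℝ := A + C with hU
    set V : Matrix (Fin n) (Fin n) ℝ := C * (M₀ - 1) with hV
    set r : Polynomial ℝ :=
      (U.map Polynomial.C + (Polynomial.X : Polynomial ℝ) • V.map Polynomial.C).det with hr
    have hreval : ∀ t : ℝ, r.eval t = (U + t • V).det := by
      intro t
      have hmap : ((U.map Polynomial.C + (Polynomial.X : Polynomial ℝ) • V.map Polynomial.C).map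
          (Polynomial.evalRingHom t)) = U + t • V := by
        ext i j
        simp [Matrix.map_apply, Matrix.add_apply, Matrix.smul_apply, smul_eq_mul]
        ring
      calc r.eval t
          = (Polynomial.evalRingHom t)
            ((U.map Polynomial.C + (Polynomial.X : Polynomial ℝ) • V.map Polynomial.C).det) := rfl
        _ = (((U.map Polynomial.C + (Polynomial.X : Polynomial ℝ) • V.map Polynomial.C)).map
            (Polynomial.evalRingHom t)).det := RingHom.map_det _ _
        _ = (U + t • V).det := by rw [hmap]
    have hgU : ∀ t : ℝ, A + C * (1 + t • (M₀ - 1)) = U + t • V := by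
      intro t
      rw [Matrix.mul_add, Matrix.mul_smul, Matrix.mul_one, hU, hV, add_assoc]
    have hr1 : r.eval 1 ≠ 0 := by
      rw [hreval, ← hgU]
      simpa using hM₀
    have hrne : r ≠ 0 := fun h0 => hr1 (by rw [h0, Polynomial.eval_zero])
    -- find `t` small with `1 + t • (M₀ - 1)` in the range of `exp` and `r.eval t ≠ 0`
    have hgcont : Continuous fun t : ℝ => (1 : Matrix (Fin n) (Fin n) ℝ) + t • (M₀ - 1) := by
      letI : SeminormedRing (Matrix (Fin n) (Fin n) ℝ) := Matrix.linftyOpSemiNormedRing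
      letI : NormedRing (Matrix (Fin n) (Fin n) ℝ) := Matrix.linftyOpNormedRing
      letI : NormedAlgebra ℝ (Matrix (Fin n) (Fin n) ℝ) := Matrix.linftyOpNormedAlgebra
      exact continuous_const.add (continuous_id.smul continuous_const)
    have hpre : (fun t : ℝ => (1 : Matrix (Fin n) (Fin n) ℝ) + t • (M₀ - 1)) ⁻¹'
        (Set.range (NormedSpace.exp)) ∈ nhds (0 : ℝ) := by
      apply hgcont.continuousAt.preimage_mem_nhds
      simpa using (range_exp_mem_nhds' (n := n))
    obtain ⟨δ, hδpos, hδ⟩ := Metric.mem_nhds_iff.1 hpre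
    obtain ⟨t, htIoo, htroot⟩ :
        ∃ t : ℝ, t ∈ Set.Ioo (0 : ℝ) δ ∧ ¬ r.IsRoot t := by
      have hinf : (Set.Ioo (0 : ℝ) δ).Infinite := Set.infinite_coe_iff.1 (Set.Ioo.infinite hδpos)
      obtain ⟨t, ht⟩ := (hinf.diff (Polynomial.finite_setOf_isRoot hrne)).nonempty
      exact ⟨t, ht.1, ht.2⟩
    have htball : t ∈ Metric.ball (0 : ℝ) δ := by
      rw [Metric.mem_ball, Real.dist_eq, sub_zero, abs_of_pos htIoo.1]
      exact htIoo.2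
    obtain ⟨B, hB⟩ := hδ htball
    -- construct the path
    have hca : c - a ≠ 0 := sub_ne_zero.2 (ne_of_gt hac)
    set Bf : Matrix (Fin n) (Fin n) ℝ := (c - a)⁻¹ • B with hBf
    refine ⟨fun x => NormedSpace.exp (x • Bf), ?_, ?_, ?_⟩
    · intro i j
      exact (contDiff_exp_entry' Bf i j).contDiffOn
    · intro x _
      exact (Matrix.isUnit_iff_isUnit_det _).1 (Matrix.isUnit_exp _)
    · have hsplit : c • Bf = (c - a) • Bf + a • Bf := by
        rw [← add_smul, sub_add_cancel]
      have hcomm : Commute ((c - a) • Bf) (a • Bf) :=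
        ((Commute.refl Bf).smul_left _).smul_right _
      have hBfB : (c - a) • Bf = B := by
        rw [hBf, smul_smul, mul_inv_cancel₀ hca, one_smul]
      have hTc : NormedSpace.exp (c • Bf)
          = ((1 : Matrix (Fin n) (Fin n) ℝ) + t • (M₀ - 1)) * NormedSpace.exp (a • Bf) := by
        rw [hsplit, Matrix.exp_add_of_commute _ _ hcomm, hBfB, hB]
      have hfact : A * NormedSpace.exp (a • Bf)
          + C * NormedSpace.exp (c • Bf)
          = (A + C * ((1 : Matrix (Fin n) (Fin n) ℝ) + t • (M₀ - 1)))
            * NormedSpace.exp (a • Bf) := by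
        rw [hTc]; noncomm_ring
      rw [hfact, Matrix.det_mul]
      refine mul_ne_zero ?_ ?_
      · rw [hgU t, ← hreval t]
        exact htroot
      · have hu : IsUnit (NormedSpace.exp (a • Bf)).det :=
          (Matrix.isUnit_iff_isUnit_det _).1 (Matrix.isUnit_exp _)
        exact hu.ne_zero
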